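/- With the chain complex of free abelian groups described in the context, the element a := [0,1,1,0] + [0,1,0,1] ∈ C_3 satisfies: (i) ∂_3 a = 0; (ii) a ∈ sDeg_3 (indeed a = x − sgn(t)·(t·x) for x = [0,1,1,0] and t the transposition swapping coordinates 2 and 3, which has sgn(t) = −1); (iii) a does not lie in the image of ∂_4 : C_4 → C_3. Consequently the subcomplexes sDeg_* and Deg_* + sDeg_* of C_* have nonvanishing homology in degree 3; in particular, with integer coefficients the symmetry subcomplex of a symmetric simplicial abelian group need not be acyclic. -/
import Mathlib


/-- Pointwise negation of a Boolean tuple. -/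
def negv {m : ℕ} (v : Fin m → Bool) : Fin m → Bool := fun i => !(v i)

/-- The equivalence relation identifying a tuple with its pointwise negation. -/
def boolSetoid (m : ℕ) : Setoid (Fin m → Bool) where
  r u v := u = v ∨ u = negv v
  iseqv := by
    constructor
    · intro x; exact Or.inl rfl
    · rintro x y (rfl | rfl)
      · exact Or.inl rfl
      · right; funext i; simp [negv]
    · rintro x y z (rfl | rfl) (rfl | rfl)
      · exact Or.inl rfl
      · exact Or.inr rfl
      · exact Or.inr rfl
      · left; funext i; simp [negv]

/-- `Q_m`: tuples `Fin m → Bool` modulo pointwise negation (`m = n+1` in degree `n`). -/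
abbrev Qn (m : ℕ) := Quotient (boolSetoid m)

/-- The chain group: the free abelian group on `Q_m`. -/
abbrev Cn (m : ℕ) := Qn m →₀ ℤ

/-- Deleting the `i`-th coordinate descends to the quotient. -/
def qdel (m : ℕ) (i : Fin (m + 1)) : Qn (m + 1) → Qn m :=
  Quotient.map (fun v => v ∘ Fin.succAbove i) (by
    rintro u v (rfl | rfl)
    · exact Or.inl rfl
    · exact Or.inr rfl)

/-- Duplicating the `i`-th coordinate descends to the quotient. -/
def qdup (m : ℕ) (i : Fin (m + 1)) : Qn (m + 1) → Qn (m + 2) :=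
  Quotient.map (fun v => v ∘ Fin.predAbove i) (by
    rintro u v (rfl | rfl)
    · exact Or.inl rfl
    · exact Or.inr rfl)

/-- Permuting the coordinates descends to the quotient. -/
def qperm (m : ℕ) (t : Equiv.Perm (Fin m)) : Qn m → Qn m :=
  Quotient.map (fun v => v ∘ t) (by
    rintro u v (rfl | rfl)
    · exact Or.inl rfl
    · exact Or.inr rfl)

/-- The face map `d_i`. -/
noncomputable def face (m : ℕ) (i : Fin (m + 1)) : Cn (m + 1) →ₗ[ℤ] Cn m :=
  Finsupp.lmapDomain ℤ ℤ (qdel m i)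

/-- The degeneracy map `s_i`. -/
noncomputable def deg (m : ℕ) (i : Fin (m + 1)) : Cn (m + 1) →ₗ[ℤ] Cn (m + 2) :=
  Finsupp.lmapDomain ℤ ℤ (qdup m i)

/-- The action of a permutation. -/
noncomputable def pact (m : ℕ) (t : Equiv.Perm (Fin m)) : Cn m →ₗ[ℤ] Cn m :=
  Finsupp.lmapDomain ℤ ℤ (qperm m t)

/-- The differential `∂ = ∑ (-1)^i d_i`. -/
noncomputable def del (m : ℕ) : Cn (m + 1) →ₗ[ℤ] Cn m :=
  ∑ i : Fin (m + 1), ((-1 : ℤ) ^ (i : ℕ)) • face m i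

/-- The symmetry subgroup `sDeg`, spanned by all `c - sgn(t) • (t • c)`. -/
noncomputable def sDeg (m : ℕ) : Submodule ℤ (Cn m) :=
  Submodule.span ℤ
    {y | ∃ (c : Cn m) (t : Equiv.Perm (Fin m)), y = c - (Equiv.Perm.sign t : ℤ) • pact m t c}

/-- The degeneracy subgroup `Deg`, generated by the images of the degeneracies. -/
noncomputable def Deg : ∀ m : ℕ, Submodule ℤ (Cn m)
  | 0 => ⊥
  | 1 => ⊥
  | (m + 2) => ⨆ i : Fin (m + 1), LinearMap.range (deg m i)

/-- The tuple `(0,1,1,0)`. -/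
def x3 : Fin 4 → Bool := ![false, true, true, false]

/-- The tuple `(0,1,0,1)`. -/
def y3 : Fin 4 → Bool := ![false, true, false, true]

/-- The cycle `a = [0,1,1,0] + [0,1,0,1]`. -/
noncomputable def aelt : Cn 4 :=
  Finsupp.single (Quotient.mk (boolSetoid 4) x3) 1 +
    Finsupp.single (Quotient.mk (boolSetoid 4) y3) 1


/-! ### Auxiliary lemmas -/

lemma del_single (m : ℕ) (q : Qn (m + 1)) :
    del m (Finsupp.single q 1) =
      ∑ i : Fin (m + 1), ((-1 : ℤ) ^ (i : ℕ)) • Finsupp.single (qdel m i q) 1 := by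
  simp [del, face, Finsupp.lmapDomain_apply, Finsupp.mapDomain_single]

lemma qmk_eq {m : ℕ} {u v : Fin m → Bool} (h : u = v ∨ u = negv v) :
    Quotient.mk (boolSetoid m) u = Quotient.mk (boolSetoid m) v :=
  Quotient.sound h

lemma qdel_mk (m : ℕ) (i : Fin (m + 1)) (v : Fin (m + 1) → Bool) :
    qdel m i (Quotient.mk (boolSetoid (m + 1)) v) =
      Quotient.mk (boolSetoid m) (v ∘ Fin.succAbove i) := rfl

lemma qperm_mk (m : ℕ) (t : Equiv.Perm (Fin m)) (v : Fin m → Bool) :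
    qperm m t (Quotient.mk (boolSetoid m) v) =
      Quotient.mk (boolSetoid m) (v ∘ t) := rfl

/-- Weight function certifying that `aelt` is not a boundary (mod 2). -/
def wf (v : Fin 4 → Bool) : ZMod 2 := if v = y3 ∨ v = negv y3 then 1 else 0

lemma wf_negv (v : Fin 4 → Bool) : wf (negv v) = wf v := by
  revert v; decide

/-- The induced weight on the quotient. -/
def W : Qn 4 → ZMod 2 :=
  Quotient.lift wf (by
    rintro u v (rfl | rfl)
    · rfl
    · exact wf_negv v)

/-- The certificate functional `Cn 4 → ZMod 2`. -/
noncomputable def F : Cn 4 →ₗ[ℤ] ZMod 2 := Finsupp.linearCombination ℤ W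

lemma F_single (q : Qn 4) : F (Finsupp.single q 1) = W q := by
  simp [F]

lemma zsmul_zmod2 (n : ℕ) (x : ZMod 2) : ((-1 : ℤ) ^ n) • x = x := by
  have h : (((-1 : ℤ) ^ n : ℤ) : ZMod 2) = 1 := by
    push_cast
    rw [show (-1 : ZMod 2) = 1 from by decide, one_pow]
  rw [zsmul_eq_mul, h, one_mul]

lemma key (v : Fin 5 → Bool) :
    wf (v ∘ Fin.succAbove 0) + wf (v ∘ Fin.succAbove 1) + wf (v ∘ Fin.succAbove 2) +
      wf (v ∘ Fin.succAbove 3) + wf (v ∘ Fin.succAbove 4) = 0 := by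
  revert v; decide

lemma F_del (b : Cn 5) : F (del 4 b) = 0 := by
  have h : F.comp (del 4) = 0 := by
    apply Finsupp.lhom_ext'
    intro q
    apply LinearMap.ext_ring
    induction q using Quotient.ind with
    | _ v =>
      simp only [LinearMap.comp_apply, Finsupp.lsingle_apply, LinearMap.zero_apply]
      rw [del_single]
      rw [map_sum]
      simp only [map_smul, F_single]
      rw [Fin.sum_univ_five]
      simp only [qdel_mk, zsmul_zmod2]
      show wf _ + wf _ + wf _ + wf _ + wf _ = 0
      exact key v
  calc F (del 4 b) = (F.comp (del 4)) b := rfl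
    _ = 0 := by rw [h]; rfl

lemma F_aelt : F aelt = 1 := by
  have hx : W (Quotient.mk (boolSetoid 4) x3) = 0 := by
    show wf x3 = 0; decide
  have hy : W (Quotient.mk (boolSetoid 4) y3) = 1 := by
    show wf y3 = 1; decide
  simp [aelt, map_add, F_single, hx, hy]

lemma not_boundary : ∀ b : Cn 5, del 4 b ≠ aelt := by
  intro b h
  have := F_del b
  rw [h, F_aelt] at this
  exact one_ne_zero this

lemma pact_x3 :
    pact 4 (Equiv.swap (2 : Fin 4) 3) (Finsupp.single (Quotient.mk (boolSetoid 4) x3) 1) =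
      Finsupp.single (Quotient.mk (boolSetoid 4) y3) 1 := by
  have h : x3 ∘ (Equiv.swap (2 : Fin 4) 3) = y3 := by
    funext i; fin_cases i <;> rfl
  simp [pact, Finsupp.lmapDomain_apply, Finsupp.mapDomain_single, qperm_mk, h]

lemma sign_swap23 : Equiv.Perm.sign (Equiv.swap (2 : Fin 4) 3) = -1 :=
  Equiv.Perm.sign_swap (by decide)

lemma aelt_eq :
    aelt =
      Finsupp.single (Quotient.mk (boolSetoid 4) x3) 1 -
        (Equiv.Perm.sign (Equiv.swap (2 : Fin 4) 3) : ℤ) •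
          pact 4 (Equiv.swap (2 : Fin 4) 3)
            (Finsupp.single (Quotient.mk (boolSetoid 4) x3) 1) := by
  rw [pact_x3, sign_swap23, aelt]
  push_cast
  module

lemma del_aelt : del 3 aelt = 0 := by
  rw [aelt, map_add, del_single, del_single, Fin.sum_univ_four, Fin.sum_univ_four]
  simp only [qdel_mk]
  have e1 : Quotient.mk (boolSetoid 3) (x3 ∘ Fin.succAbove 1) =
      Quotient.mk (boolSetoid 3) (x3 ∘ Fin.succAbove 2) := qmk_eq (by decide)
  have e2 : Quotient.mk (boolSetoid 3) (y3 ∘ Fin.succAbove 0) =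
      Quotient.mk (boolSetoid 3) (y3 ∘ Fin.succAbove 3) := qmk_eq (by decide)
  have e3 : Quotient.mk (boolSetoid 3) (y3 ∘ Fin.succAbove 1) =
      Quotient.mk (boolSetoid 3) (x3 ∘ Fin.succAbove 0) := qmk_eq (by decide)
  have e4 : Quotient.mk (boolSetoid 3) (y3 ∘ Fin.succAbove 2) =
      Quotient.mk (boolSetoid 3) (x3 ∘ Fin.succAbove 3) := qmk_eq (by decide)
  rw [e1, e2, e3, e4]
  simp only [show ((0 : Fin 4) : ℕ) = 0 from rfl, show ((1 : Fin 4) : ℕ) = 1 from rfl,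
    show ((2 : Fin 4) : ℕ) = 2 from rfl, show ((3 : Fin 4) : ℕ) = 3 from rfl]
  norm_num
  module

/-- `a = [0,1,1,0] + [0,1,0,1]` is a cycle lying in `sDeg_3` (indeed
`a = x - sgn(t)·(t·x)` for `x = [0,1,1,0]` and `t` the transposition swapping
coordinates 2 and 3, with `sgn t = -1`), but `a` is not a boundary; consequently the
subcomplexes `sDeg_*` and `Deg_* + sDeg_*` have nonvanishing homology in degree `3`:
with integer coefficients the symmetry subcomplex of a symmetric simplicial abelian
group need not be acyclic. -/
theorem stmt8 :
    -- (i)  `∂₃ a = 0`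
    del 3 aelt = 0 ∧
    -- (ii)  `a ∈ sDeg₃`, coming from the transposition `t = (2 3)` of sign `-1`
    (aelt =
        Finsupp.single (Quotient.mk (boolSetoid 4) x3) 1 -
          (Equiv.Perm.sign (Equiv.swap (2 : Fin 4) 3) : ℤ) •
            pact 4 (Equiv.swap (2 : Fin 4) 3)
              (Finsupp.single (Quotient.mk (boolSetoid 4) x3) 1) ∧
      Equiv.Perm.sign (Equiv.swap (2 : Fin 4) 3) = -1 ∧
      pact 4 (Equiv.swap (2 : Fin 4) 3) (Finsupp.single (Quotient.mk (boolSetoid 4) x3) 1) =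
        Finsupp.single (Quotient.mk (boolSetoid 4) y3) 1 ∧
      aelt ∈ sDeg 4) ∧
    -- (iii)  `a` is not a boundary
    (∀ b : Cn 5, del 4 b ≠ aelt) ∧
    -- consequently `sDeg_*` has nonvanishing homology in degree 3 ...
    (∃ z ∈ sDeg 4, del 3 z = 0 ∧ ∀ y ∈ sDeg 5, del 4 y ≠ z) ∧
    -- ... and so does `Deg_* + sDeg_*`
    (∃ z ∈ Deg 4 ⊔ sDeg 4, del 3 z = 0 ∧ ∀ y ∈ Deg 5 ⊔ sDeg 5, del 4 y ≠ z) := by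
  refine ⟨del_aelt, ⟨aelt_eq, sign_swap23, pact_x3, ?_⟩, not_boundary, ?_, ?_⟩
  · exact Submodule.subset_span
      ⟨Finsupp.single (Quotient.mk (boolSetoid 4) x3) 1, Equiv.swap (2 : Fin 4) 3, aelt_eq⟩
  · exact ⟨aelt, Submodule.subset_span
      ⟨Finsupp.single (Quotient.mk (boolSetoid 4) x3) 1, Equiv.swap (2 : Fin 4) 3, aelt_eq⟩,
      del_aelt, fun y _ => not_boundary y⟩
  · exact ⟨aelt, Submodule.mem_sup_right (Submodule.subset_span
      ⟨Finsupp.single (Quotient.mk (boolSetoid 4) x3) 1, Equiv.swap (2 : Fin 4) 3, aelt_eq⟩),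
      del_aelt, fun y _ => not_boundary y⟩
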